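/- Under the same setup, ∫ G(e^{jθ}) (Ψ(e^{jθ})/(G(e^{jθ})* Λ G(e^{jθ}))) G(e^{jθ})* dθ/(2π) is a positive definite matrix. -/

import Mathlib

open Matrix MeasureTheory Real Filter
open scoped ComplexOrder

noncomputable section

abbrev Mat (n : ℕ) := Matrix (Fin n) (Fin n) ℂ
abbrev Vec (n : ℕ) := Matrix (Fin n) (Fin 1) ℂ

/-- the point e^{jθ} on the unit circle -/
def circPt (θ : ℝ) : ℂ := Complex.exp (θ * Complex.I)

/-- G(e^{jθ}) = (e^{jθ} I - A)⁻¹ B -/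
def Gm {n : ℕ} (A : Mat n) (B : Vec n) (θ : ℝ) : Vec n :=
  (circPt θ • (1 : Mat n) - A)⁻¹ * B

/-- the scalar G* Λ G at e^{jθ} -/
def quad {n : ℕ} (A : Mat n) (B : Vec n) (Λ : Mat n) (θ : ℝ) : ℂ :=
  ((Gm A B θ)ᴴ * Λ * Gm A B θ) 0 0

/-- normalized entrywise matrix integral over the unit circle -/
def mInt {n : ℕ} (f : ℝ → Mat n) : Mat n :=
  Matrix.of fun i j => (1 / (2 * π) : ℝ) • ∫ θ in (0:ℝ)..(2 * π), f θ i j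

/-- normalized scalar (complex) integral over the unit circle -/
def sInt (f : ℝ → ℂ) : ℂ := (1 / (2 * π) : ℝ) • ∫ θ in (0:ℝ)..(2 * π), f θ

/-- normalized scalar (real) integral over the unit circle -/
def sIntR (f : ℝ → ℝ) : ℝ := (1 / (2 * π)) * ∫ θ in (0:ℝ)..(2 * π), f θ

/-- all eigenvalues of A lie in the open unit disc -/
def IsStable {n : ℕ} (A : Mat n) : Prop := ∀ μ ∈ spectrum ℂ A, ‖μ‖ < 1

/-- (A,B) is a reachable pair: the controllability matrix has full rank -/
def Reachable {n : ℕ} (A : Mat n) (B : Vec n) : Prop :=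
  (Matrix.of fun (i : Fin n) (k : Fin n) => (A ^ (k : ℕ) * B) i 0).rank = n

open scoped Classical in
/-- positive semidefinite square root (junk value 0 off the psd cone) -/
def msqrt {n : ℕ} (M : Mat n) : Mat n :=
  if h : M.PosSemidef then
    h.1.eigenvectorUnitary.1 * diagonal ((↑) ∘ Real.sqrt ∘ h.1.eigenvalues) *
      (star h.1.eigenvectorUnitary : Mat n) else 0

/-- the moment map ∫ G (Ψ/(G*ΛG)) G* -/
def moment {n : ℕ} (A : Mat n) (B : Vec n) (Ψ : ℝ → ℝ) (Λ : Mat n) : Mat n :=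
  mInt (fun θ => ((Ψ θ : ℂ) / quad A B Λ θ) • (Gm A B θ * (Gm A B θ)ᴴ))

/-- the iteration map Θ(Λ) = ∫ Λ^{1/2} G (Ψ/(G*ΛG)) G* Λ^{1/2} -/
def Theta {n : ℕ} (A : Mat n) (B : Vec n) (Ψ : ℝ → ℝ) (Λ : Mat n) : Mat n :=
  mInt (fun θ => ((Ψ θ : ℂ) / quad A B Λ θ) •
    (msqrt Λ * (Gm A B θ * (Gm A B θ)ᴴ) * msqrt Λ))

/-- the linearization M of Θ at Λ:
M(X) = X - Λ^{1/2} ∫ (GΨG*/(G*ΛG)) (G*XG/(G*ΛG)) Λ^{1/2} -/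
def Mlin {n : ℕ} (A : Mat n) (B : Vec n) (Ψ : ℝ → ℝ) (Λ : Mat n) (X : Mat n) : Mat n :=
  X - msqrt Λ * mInt (fun θ =>
    (((Ψ θ : ℂ) * (((Gm A B θ)ᴴ * X * Gm A B θ) 0 0)) / (quad A B Λ θ) ^ 2) •
      (Gm A B θ * (Gm A B θ)ᴴ)) * msqrt Λ

/-- the range of the operator Γ : Φ ↦ ∫ G Φ G* on continuous (2π-periodic) functions -/
def RangeGamma {n : ℕ} (A : Mat n) (B : Vec n) : Set (Mat n) :=
  {M | ∃ Φ : ℝ → ℝ, Continuous Φ ∧ (∀ θ, Φ (θ + 2 * π) = Φ θ) ∧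
    M = mInt (fun θ => (Φ θ : ℂ) • (Gm A B θ * (Gm A B θ)ᴴ))}


open Polynomial

lemma charmatrix_eval {n : ℕ} (A : Mat n) (z : ℂ) :
    (charmatrix A).map (evalRingHom z) = z • (1 : Mat n) - A := by
  ext i j
  by_cases h : i = j
  · subst h; simp [charmatrix_apply, Matrix.one_apply]
  · simp [charmatrix_apply, Matrix.one_apply, h, Matrix.diagonal_apply_ne _ h]

lemma adjugate_charmatrix_natDegree_lt {n : ℕ} (A : Mat n) (i j : Fin n) :
    ((adjugate (charmatrix A)) i j).natDegree < n := by
  rw [adjugate_apply]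
  have hn : 0 < n := i.pos
  rw [Matrix.det_apply]
  refine lt_of_le_of_lt (natDegree_sum_le_of_forall_le _ _ fun σ _ => ?_) (Nat.sub_lt hn one_pos)
  have h1 : natDegree (Equiv.Perm.sign σ • ∏ c, ((charmatrix A).updateRow j (Pi.single i 1)) (σ c) c)
      ≤ natDegree (∏ c, ((charmatrix A).updateRow j (Pi.single i 1)) (σ c) c) := by
    rcases Int.units_eq_one_or (Equiv.Perm.sign σ) with sg | sg
    · rw [sg, one_smul]
    · rw [sg, Units.neg_smul, one_smul, natDegree_neg]
  refine h1.trans ((natDegree_prod_le _ _).trans ?_)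
  have key : ∀ c : Fin n, natDegree (((charmatrix A).updateRow j (Pi.single i 1)) (σ c) c)
      ≤ if σ c = j then 0 else 1 := by
    intro c
    by_cases h : σ c = j
    · subst h
      rw [if_pos rfl, Matrix.updateRow_self]
      rcases eq_or_ne c i with rfl | hci
      · simp
      · rw [Pi.single_eq_of_ne' (fun h => hci h.symm)]
        simp
    · rw [if_neg h, Matrix.updateRow_ne h]
      by_cases hc : σ c = c
      · rw [hc, charmatrix_apply_eq]
        exact (natDegree_X_sub_C_le _)
      · rw [charmatrix_apply_ne _ _ _ hc]
        simp [natDegree_neg]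
  calc ∑ c, natDegree (((charmatrix A).updateRow j (Pi.single i 1)) (σ c) c)
      ≤ ∑ c, if σ c = j then 0 else 1 := Finset.sum_le_sum fun c _ => key c
    _ = n - 1 := by
        have : ∀ c : Fin n, (if σ c = j then 0 else 1) = (if c = σ⁻¹ j then 0 else 1) := by
          intro c
          congr 1
          simp [Equiv.eq_symm_apply, eq_comm, Equiv.Perm.eq_inv_iff_eq]
        simp_rw [this]
        rw [← Finset.sum_erase_add _ _ (Finset.mem_univ (σ⁻¹ j)), if_pos rfl, add_zero,
          Finset.sum_congr rfl (fun c hc => if_neg (Finset.ne_of_mem_erase hc)),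
          Finset.sum_const, smul_eq_mul, mul_one,
          Finset.card_erase_of_mem (Finset.mem_univ _), Finset.card_univ, Fintype.card_fin]

/-- coefficient matrices of the adjugate of the charmatrix -/
def Ncoef {n : ℕ} (A : Mat n) (k : ℕ) : Mat n :=
  Matrix.of fun i j => ((adjugate (charmatrix A)) i j).coeff k

lemma Ncoef_eq_zero {n : ℕ} (A : Mat n) {k : ℕ} (hk : n ≤ k) : Ncoef A k = 0 := by
  ext i j
  exact Polynomial.coeff_eq_zero_of_natDegree_lt
    (lt_of_lt_of_le (adjugate_charmatrix_natDegree_lt A i j) hk)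

lemma Ncoef_rec {n : ℕ} (A : Mat n) (k : ℕ) :
    Ncoef A k = Ncoef A (k + 1) * A + ((A.charpoly).coeff (k + 1)) • (1 : Mat n) := by
  have h := Matrix.adjugate_mul (charmatrix A)
  ext i j
  have h2 := congrArg (fun M => Polynomial.coeff (M i j) (k + 1)) h
  simp only [Matrix.mul_apply, Matrix.smul_apply, Matrix.one_apply] at h2
  rw [Polynomial.finset_sum_coeff] at h2
  have hterm : ∀ l : Fin n, ((adjugate (charmatrix A)) i l * charmatrix A l j).coeff (k + 1)
      = (if l = j then ((adjugate (charmatrix A)) i j).coeff k else 0)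
        - ((adjugate (charmatrix A)) i l).coeff (k + 1) * A l j := by
    intro l
    rw [charmatrix_apply, mul_sub, Polynomial.coeff_sub, Polynomial.coeff_mul_C]
    congr 1
    by_cases hl : l = j
    · subst hl
      simp [Polynomial.coeff_mul_X]
    · simp [Matrix.diagonal_apply_ne _ hl, hl]
  rw [Finset.sum_congr rfl (fun l _ => hterm l), Finset.sum_sub_distrib,
    Finset.sum_ite_eq' Finset.univ j _] at h2
  simp only [Finset.mem_univ, if_pos] at h2
  by_cases hij : i = j
  · subst hij
    simp only [if_pos rfl] at h2 ⊢
    simp only [Matrix.add_apply, Matrix.mul_apply, Matrix.smul_apply, Matrix.one_apply,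
      if_pos rfl, smul_eq_mul, mul_one, Ncoef, Matrix.of_apply]
    simp only [if_true, smul_eq_mul, mul_one, Matrix.charpoly] at h2 ⊢
    linear_combination h2
  · simp only [if_neg hij] at h2
    simp only [Matrix.add_apply, Matrix.mul_apply, Matrix.smul_apply, Matrix.one_apply,
      if_neg hij, smul_eq_mul, mul_zero, add_zero, Ncoef, Matrix.of_apply]
    simp only [smul_zero, Polynomial.coeff_zero] at h2
    linear_combination h2

lemma quadForm_sum {n : ℕ} (u b : Fin n → ℂ) {ι : Type*} (s : Finset ι) (f : ι → Mat n) :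
    u ⬝ᵥ (∑ j ∈ s, f j) *ᵥ b = ∑ j ∈ s, u ⬝ᵥ (f j) *ᵥ b := by
  classical
  induction s using Finset.cons_induction with
  | empty => simp [Matrix.zero_mulVec]
  | cons a s ha ih =>
      rw [Finset.sum_cons, Finset.sum_cons, Matrix.add_mulVec, dotProduct_add, ih]

lemma quadForm_smul {n : ℕ} (u b : Fin n → ℂ) (c : ℂ) (M : Mat n) :
    u ⬝ᵥ (c • M) *ᵥ b = c * (u ⬝ᵥ M *ᵥ b) := by
  rw [Matrix.smul_mulVec, dotProduct_smul, smul_eq_mul]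

lemma quadForm_eq {n : ℕ} (u b : Fin n → ℂ) (M : Mat n) :
    u ⬝ᵥ M *ᵥ b = ∑ i, ∑ j, u i * M i j * b j := by
  simp [dotProduct, Matrix.mulVec, Finset.mul_sum, mul_assoc]

lemma Ncoef_closed {n : ℕ} (A : Mat n) :
    ∀ d, d < n → Ncoef A (n - 1 - d)
      = ∑ j ∈ Finset.range (d + 1), ((A.charpoly).coeff (n - d + j)) • A ^ j := by
  intro d
  induction d with
  | zero =>
      intro hd
      have h0 : n - 1 - 0 = n - 1 := rfl
      rw [h0, Ncoef_rec A (n - 1), Ncoef_eq_zero A (by omega), Matrix.zero_mul, zero_add]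
      have h1 : n - 1 + 1 = n := by omega
      rw [h1]
      simp
  | succ d ih =>
      intro hd
      have hd' : d < n := by omega
      rw [show n - 1 - (d + 1) = n - 2 - d by omega, Ncoef_rec A (n - 2 - d),
        show n - 2 - d + 1 = n - 1 - d by omega, ih hd', Finset.sum_mul,
        Finset.sum_range_succ' (fun j => ((A.charpoly).coeff (n - (d + 1) + j)) • A ^ j) (d + 1)]
      congr 1
      · apply Finset.sum_congr rfl
        intro j _
        rw [Matrix.smul_mul, ← pow_succ, show n - (d + 1) + (j + 1) = n - d + j by omega]
      · rw [show n - 1 - d = n - (d + 1) + 0 by omega]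
        simp

lemma powers_vanish {n : ℕ} (A : Mat n) (u b : Fin n → ℂ)
    (H : ∀ k, u ⬝ᵥ (Ncoef A k) *ᵥ b = 0) : ∀ m, m < n → u ⬝ᵥ (A ^ m) *ᵥ b = 0 := by
  intro m
  induction m using Nat.strong_induction_on with
  | _ m IH =>
    intro hm
    have h := H (n - 1 - m)
    rw [Ncoef_closed A m hm, quadForm_sum, Finset.sum_range_succ] at h
    rw [Finset.sum_congr rfl (fun j hj => by
      have hj' := Finset.mem_range.mp hj
      rw [quadForm_smul, IH j hj' (hj'.trans hm), mul_zero])] at h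
    rw [Finset.sum_const_zero, zero_add, quadForm_smul] at h
    rw [show n - m + m = n by omega] at h
    have hmonic : (A.charpoly).coeff n = 1 := by
      have hdeg : (A.charpoly).natDegree = n := by
        rw [Matrix.charpoly_natDegree_eq_dim, Fintype.card_fin]
      have hm2 := (Matrix.charpoly_monic A).coeff_natDegree
      rwa [hdeg] at hm2
    rw [hmonic, one_mul] at h
    exact h

lemma circPt_norm (θ : ℝ) : ‖circPt θ‖ = 1 := Complex.norm_exp_ofReal_mul_I θ

lemma det_ne_zero {n : ℕ} {A : Mat n} (hA : IsStable A) (θ : ℝ) :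
    (circPt θ • (1 : Mat n) - A).det ≠ 0 := by
  have hnot : circPt θ ∉ spectrum ℂ A := by
    intro hmem
    have := hA _ hmem
    rw [circPt_norm] at this
    exact lt_irrefl 1 this
  rw [spectrum.mem_iff, not_not] at hnot
  rw [Algebra.algebraMap_eq_smul_one] at hnot
  have := (Matrix.isUnit_iff_isUnit_det _).mp hnot
  exact this.ne_zero

lemma circPt_injOn : Set.InjOn circPt (Set.Ioo 0 (2 * π)) := by
  intro a ha b hb hab
  rw [circPt, circPt, Complex.exp_eq_exp_iff_exists_int] at hab
  obtain ⟨k, hk⟩ := hab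
  have hC : (a : ℂ) = (b : ℂ) + (k : ℂ) * (2 * π) :=
    mul_right_cancel₀ Complex.I_ne_zero (hk.trans (by ring))
  have h2 : a = b + (k : ℝ) * (2 * π) := by exact_mod_cast hC
  have hπ := Real.pi_pos
  have hk0 : k = 0 := by
    rcases lt_trichotomy k 0 with h | h | h
    · exfalso
      have : (k : ℝ) ≤ -1 := by exact_mod_cast (by omega : k ≤ -1)
      nlinarith [ha.1, ha.2, hb.1, hb.2]
    · exact h
    · exfalso
      have : (1 : ℝ) ≤ (k : ℝ) := by exact_mod_cast h
      nlinarith [ha.1, ha.2, hb.1, hb.2]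
  rw [hk0] at h2
  simpa using h2

lemma key_vanish {n : ℕ} (A : Mat n) (B : Vec n) (hA : IsStable A) (hR : Reachable A B)
    (x : Fin n → ℂ)
    (hx : ∀ θ ∈ Set.Ioo (0:ℝ) (2 * π), (∑ i, (starRingEnd ℂ) (x i) * Gm A B θ i 0) = 0) :
    x = 0 := by
  classical
  set u : Fin n → ℂ := fun i => (starRingEnd ℂ) (x i) with hu
  set b : Fin n → ℂ := fun j => B j 0 with hb
  -- the polynomial
  set p : Polynomial ℂ :=
    ∑ i, ∑ j, Polynomial.C (u i) * (adjugate (charmatrix A) i j) * Polynomial.C (b j) with hp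
  -- evaluation of p
  have heval : ∀ z : ℂ, p.eval z = u ⬝ᵥ (adjugate (z • (1 : Mat n) - A)) *ᵥ b := by
    intro z
    have hadj : ∀ i j, (adjugate (charmatrix A) i j).eval z
        = adjugate (z • (1 : Mat n) - A) i j := by
      intro i j
      have h := (evalRingHom z).map_adjugate (charmatrix A)
      rw [RingHom.mapMatrix_apply, RingHom.mapMatrix_apply, charmatrix_eval] at h
      have := congrArg (fun M => M i j) h
      simpa [Matrix.map_apply] using this
    rw [hp, quadForm_eq]
    simp only [Polynomial.eval_finset_sum, Polynomial.eval_mul, Polynomial.eval_C]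
    refine Finset.sum_congr rfl fun i _ => Finset.sum_congr rfl fun j _ => ?_
    rw [hadj]
  -- roots on the circle
  have hroot : ∀ θ ∈ Set.Ioo (0:ℝ) (2 * π), p.IsRoot (circPt θ) := by
    intro θ hθ
    have hdet := det_ne_zero hA θ
    set M := circPt θ • (1 : Mat n) - A with hM
    have hadjdet : adjugate M = M.det • M⁻¹ := by
      rw [Matrix.inv_def, smul_smul, Ring.inverse_eq_inv', mul_inv_cancel₀ hdet, one_smul]
    rw [Polynomial.IsRoot, heval, hadjdet, quadForm_smul]
    have hs : u ⬝ᵥ M⁻¹ *ᵥ b = 0 := by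
      rw [← hx θ hθ, quadForm_eq]
      refine Finset.sum_congr rfl fun i _ => ?_
      rw [show Gm A B θ i 0 = ∑ j, M⁻¹ i j * b j from Matrix.mul_apply, Finset.mul_sum]
      exact Finset.sum_congr rfl fun j _ => by ring
    rw [hs, mul_zero]
  -- p has infinitely many roots
  have hpzero : p = 0 := by
    apply Polynomial.eq_zero_of_infinite_isRoot
    exact (Set.Infinite.image circPt_injOn (Set.Ioo_infinite (by positivity))).mono
      (by rintro z ⟨θ, hθ, rfl⟩; exact hroot θ hθ)
  -- coefficients vanish
  have hcoeff : ∀ k, u ⬝ᵥ (Ncoef A k) *ᵥ b = 0 := by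
    intro k
    have h := congrArg (fun q => Polynomial.coeff q k) hpzero
    simp only [Polynomial.coeff_zero] at h
    rw [hp] at h
    simp only [Polynomial.finset_sum_coeff, Polynomial.coeff_mul_C, Polynomial.coeff_C_mul] at h
    rw [← h, quadForm_eq]
    exact Finset.sum_congr rfl fun i _ => Finset.sum_congr rfl fun j _ => by
      rw [Ncoef, Matrix.of_apply]
  have hpows := powers_vanish A u b hcoeff
  -- reachability
  set Ctrl : Mat n := Matrix.of fun (i : Fin n) (k : Fin n) => (A ^ (k : ℕ) * B) i 0 with hC
  have hvm : u ᵥ* Ctrl = 0 := by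
    funext k
    have h0 := hpows (k : ℕ) k.isLt
    rw [quadForm_eq] at h0
    have hk : (u ᵥ* Ctrl) k = ∑ i, u i * Ctrl i k := by
      simp [Matrix.vecMul, dotProduct]
    rw [Pi.zero_apply, hk, ← h0]
    refine Finset.sum_congr rfl fun i _ => ?_
    rw [hC, Matrix.of_apply, show (A ^ (k : ℕ) * B) i 0 = ∑ j, (A ^ (k : ℕ)) i j * B j 0
      from Matrix.mul_apply, Finset.mul_sum]
    exact Finset.sum_congr rfl fun j _ => by simp only [hb]; ring
  have hu0 : u = 0 := by
    have hrank : (Ctrlᵀ).rank = n := by rw [Matrix.rank_transpose]; exact hR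
    have hsurj : Function.Surjective (Ctrlᵀ).mulVecLin := by
      rw [← LinearMap.range_eq_top]
      apply Submodule.eq_top_of_finrank_eq
      rw [← Matrix.rank] at *
      rw [hrank, Module.finrank_fintype_fun_eq_card, Fintype.card_fin]
    have hinj : Function.Injective (Ctrlᵀ).mulVecLin :=
      (LinearMap.injective_iff_surjective).mpr hsurj
    apply hinj
    rw [Matrix.mulVecLin_apply, Matrix.mulVec_transpose, hvm, map_zero]
  funext i
  have := congrArg (fun v => (starRingEnd ℂ) (v i)) hu0
  simpa [hu] using this

section Analysis

lemma intervalIntegral_conj {f : ℝ → ℂ} {a b : ℝ} :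
    (∫ x in a..b, (starRingEnd ℂ) (f x)) = (starRingEnd ℂ) (∫ x in a..b, f x) := by
  rw [intervalIntegral, intervalIntegral, integral_conj, integral_conj, ← map_sub]

lemma continuous_circPt : Continuous circPt :=
  Complex.continuous_exp.comp (Complex.continuous_ofReal.mul continuous_const)

lemma continuous_inv_circ {n : ℕ} {A : Mat n} (hA : IsStable A) :
    Continuous fun θ => (circPt θ • (1 : Mat n) - A)⁻¹ := by
  have hM : Continuous fun θ => circPt θ • (1 : Mat n) - A :=
    (continuous_circPt.smul continuous_const).sub continuous_const
  rw [continuous_iff_continuousAt]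
  intro θ
  refine (continuousAt_matrix_inv _ ?_).comp hM.continuousAt
  have hu : IsUnit ((circPt θ • (1 : Mat n) - A).det) :=
    isUnit_iff_ne_zero.mpr (det_ne_zero hA θ)
  simpa using NormedRing.inverse_continuousAt hu.unit

lemma continuous_Gm {n : ℕ} {A : Mat n} (B : Vec n) (hA : IsStable A) :
    Continuous fun θ => Gm A B θ :=
  (continuous_inv_circ hA).matrix_mul continuous_const

lemma continuous_quad {n : ℕ} {A : Mat n} (B : Vec n) (Λ : Mat n) (hA : IsStable A) :
    Continuous fun θ => quad A B Λ θ :=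
  ((((continuous_Gm B hA).matrix_conjTranspose.matrix_mul continuous_const).matrix_mul
    (continuous_Gm B hA)).matrix_elem 0 0)

end Analysis

set_option maxHeartbeats 2000000

/-- ∫ G (Ψ/(G*ΛG)) G* is positive definite. -/
theorem stmt3 {n : ℕ} (A : Mat n) (B : Vec n) (Ψ : ℝ → ℝ) (Λ : Mat n)
    (hA : IsStable A) (hR : Reachable A B)
    (hΨc : Continuous Ψ) (hΨpos : ∀ θ, 0 < Ψ θ)
    (hΛ : Λ.IsHermitian)
    (hq : ∀ θ, 0 < (quad A B Λ θ).re) :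
    (moment A B Ψ Λ).PosDef := by
  classical
  set c : ℝ → ℂ := fun θ => (Ψ θ : ℂ) / quad A B Λ θ with hc
  set gg : ℝ → Mat n := fun θ => c θ • (Gm A B θ * (Gm A B θ)ᴴ) with hgg
  have hmom : moment A B Ψ Λ = mInt gg := rfl
  have hquad_conj : ∀ θ, (starRingEnd ℂ) (quad A B Λ θ) = quad A B Λ θ := by
    intro θ
    have h1 : ((Gm A B θ)ᴴ * Λ * Gm A B θ)ᴴ = (Gm A B θ)ᴴ * Λ * Gm A B θ := by
      rw [Matrix.conjTranspose_mul, Matrix.conjTranspose_mul,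
        Matrix.conjTranspose_conjTranspose, hΛ.eq, Matrix.mul_assoc]
    have h2 := congrArg (fun M => M (0 : Fin 1) (0 : Fin 1)) h1
    simp only [Matrix.conjTranspose_apply] at h2
    simpa [quad] using h2
  have hquad_ne : ∀ θ, quad A B Λ θ ≠ 0 := by
    intro θ h
    have := hq θ
    rw [h] at this
    simp at this
  have hc_conj : ∀ θ, (starRingEnd ℂ) (c θ) = c θ := by
    intro θ
    rw [hc]
    simp only []
    rw [map_div₀, Complex.conj_ofReal, hquad_conj]
  have hquad_real : ∀ θ, quad A B Λ θ = (((quad A B Λ θ).re : ℝ) : ℂ) := fun θ =>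
    (Complex.conj_eq_iff_re.mp (hquad_conj θ)).symm
  -- continuity
  have hGmc := continuous_Gm B hA
  have hquadc := continuous_quad B Λ hA
  have hcc : Continuous c := (Complex.continuous_ofReal.comp hΨc).div hquadc hquad_ne
  have hggc : ∀ i j, Continuous fun θ => gg θ i j := fun i j =>
    (hcc.smul (hGmc.matrix_mul hGmc.matrix_conjTranspose)).matrix_elem i j
  have hgg_entry : ∀ (θ : ℝ) (i j : Fin n), gg θ i j
      = c θ * (Gm A B θ i 0 * (starRingEnd ℂ) (Gm A B θ j 0)) := by
    intro θ i j
    rw [hgg]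
    simp [Matrix.smul_apply, Matrix.mul_apply, Matrix.conjTranspose_apply,
      Fin.sum_univ_one, smul_eq_mul]
  -- Hermitian
  have hherm : (moment A B Ψ Λ).IsHermitian := by
    rw [Matrix.IsHermitian]
    ext i j
    rw [Matrix.conjTranspose_apply, hmom]
    show star ((mInt gg) j i) = (mInt gg) i j
    rw [show (mInt gg) j i = (1 / (2 * π) : ℝ) • ∫ θ in (0:ℝ)..(2 * π), gg θ j i from rfl,
      show (mInt gg) i j = (1 / (2 * π) : ℝ) • ∫ θ in (0:ℝ)..(2 * π), gg θ i j from rfl]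
    rw [Complex.real_smul, Complex.real_smul, RCLike.star_def, _root_.map_mul, Complex.conj_ofReal,
      ← intervalIntegral_conj]
    congr 1
    apply intervalIntegral.integral_congr
    intro θ _
    show (starRingEnd ℂ) (gg θ j i) = gg θ i j
    rw [hgg_entry, hgg_entry, _root_.map_mul, _root_.map_mul, hc_conj, Complex.conj_conj]
    ring
  refine Matrix.PosDef.of_dotProduct_mulVec_pos hherm fun x hx => ?_
  -- the scalar function s and real integrand F
  set sf : ℝ → ℂ := fun θ => ∑ i, (starRingEnd ℂ) (x i) * Gm A B θ i 0 with hsf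
  have hsfc : Continuous sf :=
    continuous_finset_sum _ fun i _ => continuous_const.mul (hGmc.matrix_elem i 0)
  set F : ℝ → ℝ := fun θ => (Ψ θ / (quad A B Λ θ).re) * Complex.normSq (sf θ) with hF
  have hFc : Continuous F :=
    (hΨc.div (Complex.continuous_re.comp hquadc) fun θ => (hq θ).ne').mul
      (Complex.continuous_normSq.comp hsfc)
  have hFnn : ∀ θ, 0 ≤ F θ := fun θ =>
    mul_nonneg (div_nonneg (hΨpos θ).le (hq θ).le) (Complex.normSq_nonneg _)
  have hcR : ∀ θ, c θ = ((Ψ θ / (quad A B Λ θ).re : ℝ) : ℂ) := by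
    intro θ
    rw [hc]
    simp only []
    conv_lhs => rw [hquad_real θ]
    rw [Complex.ofReal_div]
  -- pointwise identity
  have hpoint : ∀ θ : ℝ, (∑ i, ∑ j, (star x) i * gg θ i j * x j) = ((F θ : ℝ) : ℂ) := by
    intro θ
    have h1 : (∑ i, ∑ j, (star x) i * gg θ i j * x j)
        = c θ * (sf θ * (starRingEnd ℂ) (sf θ)) := by
      rw [hsf]
      simp only [map_sum]
      rw [Finset.sum_mul_sum, Finset.mul_sum]
      refine Finset.sum_congr rfl fun i _ => ?_
      rw [Finset.mul_sum]
      refine Finset.sum_congr rfl fun j _ => ?_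
      rw [hgg_entry, _root_.map_mul, Complex.conj_conj]
      simp only [Pi.star_apply, RCLike.star_def]
      ring
    rw [h1, Complex.mul_conj, hcR, ← Complex.ofReal_mul]
  -- integrability of entries
  have hint : ∀ i j : Fin n, IntervalIntegrable
      (fun θ => (star x) i * gg θ i j * x j) MeasureTheory.volume 0 (2 * π) :=
    fun i j => ((continuous_const.mul (hggc i j)).mul continuous_const).intervalIntegrable 0 (2 * π)
  -- main computation
  have hkey : star x ⬝ᵥ (moment A B Ψ Λ) *ᵥ x
      = ((1 / (2 * π) * ∫ θ in (0:ℝ)..(2 * π), F θ : ℝ) : ℂ) := by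
    rw [hmom, quadForm_eq]
    calc ∑ i, ∑ j, (star x) i * (mInt gg) i j * x j
        = ∑ i, ∑ j, (1 / (2 * π) : ℝ) •
            ∫ θ in (0:ℝ)..(2 * π), (star x) i * gg θ i j * x j := by
          refine Finset.sum_congr rfl fun i _ => Finset.sum_congr rfl fun j _ => ?_
          rw [show (mInt gg) i j = (1 / (2 * π) : ℝ) • ∫ θ in (0:ℝ)..(2 * π), gg θ i j from rfl]
          rw [intervalIntegral.integral_mul_const, intervalIntegral.integral_const_mul]
          rw [Complex.real_smul, Complex.real_smul]
          ring
      _ = (1 / (2 * π) : ℝ) • ∑ i, ∑ j,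
            ∫ θ in (0:ℝ)..(2 * π), (star x) i * gg θ i j * x j := by
          rw [Finset.smul_sum]
          exact Finset.sum_congr rfl fun i _ => (Finset.smul_sum).symm
      _ = (1 / (2 * π) : ℝ) • ∫ θ in (0:ℝ)..(2 * π), ∑ i, ∑ j, (star x) i * gg θ i j * x j := by
          congr 1
          have step1 : (∫ θ in (0:ℝ)..(2 * π), ∑ i, ∑ j, (star x) i * gg θ i j * x j)
              = ∑ i, ∫ θ in (0:ℝ)..(2 * π), ∑ j, (star x) i * gg θ i j * x j :=
            intervalIntegral.integral_finset_sum fun i _ =>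
              (continuous_finset_sum _ fun j _ =>
                (continuous_const.mul (hggc i j)).mul continuous_const).intervalIntegrable 0 (2 * π)
          have step2 : ∀ i : Fin n, (∫ θ in (0:ℝ)..(2 * π), ∑ j, (star x) i * gg θ i j * x j)
              = ∑ j, ∫ θ in (0:ℝ)..(2 * π), (star x) i * gg θ i j * x j := fun i =>
            intervalIntegral.integral_finset_sum fun j _ => hint i j
          rw [step1]
          exact Finset.sum_congr rfl fun i _ => (step2 i).symm
      _ = (1 / (2 * π) : ℝ) • ∫ θ in (0:ℝ)..(2 * π), ((F θ : ℝ) : ℂ) := by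
          congr 1
          exact intervalIntegral.integral_congr fun θ _ => hpoint θ
      _ = ((1 / (2 * π) * ∫ θ in (0:ℝ)..(2 * π), F θ : ℝ) : ℂ) := by
          rw [intervalIntegral.integral_ofReal, Complex.real_smul, ← Complex.ofReal_mul]
  rw [hkey]
  apply Complex.zero_lt_real.mpr
  have hx' : ∃ θ₀ ∈ Set.Ioo (0:ℝ) (2 * π), sf θ₀ ≠ 0 := by
    by_contra h
    push_neg at h
    exact hx (key_vanish A B hA hR x h)
  obtain ⟨θ₀, hθ₀, hs0⟩ := hx'
  have hFpos : 0 < F θ₀ :=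
    mul_pos (div_pos (hΨpos θ₀) (hq θ₀)) (Complex.normSq_pos.mpr hs0)
  have h2π : (0:ℝ) < 2 * π := by positivity
  have hintpos : 0 < ∫ θ in (0:ℝ)..(2 * π), F θ :=
    intervalIntegral.integral_pos h2π hFc.continuousOn (fun u _ => hFnn u)
      ⟨θ₀, ⟨hθ₀.1.le, hθ₀.2.le⟩, hFpos⟩
  exact mul_pos (by positivity) hintpos
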